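/- If A is a closed densely defined operator on a Hilbert space and J is a bounded invertible operator with J A = A* J, then the spectrum of A is symmetric with respect to the real axis: z ∈ σ(A) if and only if z̄ ∈ σ(A). -/
import Mathlib

/-- If `J` is boundedly invertible and `J A = A* J`, then the spectrum of `A` is
symmetric with respect to the real axis. -/
theorem spectrum_conj_symmetric
    {H : Type*} [NormedAddCommGroup H] [InnerProductSpace ℂ H] [CompleteSpace H]
    (A J J' : H →L[ℂ] H) (hJJ' : J ∘L J' = 1) (hJ'J : J' ∘L J = 1)
    (hintertwine : J ∘L A = ContinuousLinearMap.adjoint A ∘L J) :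
    ∀ z : ℂ, z ∈ spectrum ℂ A ↔ (starRingEnd ℂ) z ∈ spectrum ℂ A := by
  have key : ∀ w : ℂ, w ∈ spectrum ℂ A ↔ (starRingEnd ℂ) w ∈ spectrum ℂ (star A) := by
    intro w
    rw [spectrum.mem_iff, spectrum.mem_iff, not_iff_not]
    have : algebraMap ℂ (H →L[ℂ] H) ((starRingEnd ℂ) w) - star A
        = star (algebraMap ℂ (H →L[ℂ] H) w - A) := by
      rw [star_sub]
      congr 1
      simp [Algebra.algebraMap_eq_smul_one, star_smul]
    rw [this, isUnit_star]
  have u : (H →L[ℂ] H)ˣ := ⟨J, J', hJJ', hJ'J⟩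
  have hAstar : star A = (J : H →L[ℂ] H) * A * J' := by
    have : ContinuousLinearMap.adjoint A = (J ∘L A) ∘L J' := by
      rw [hintertwine, ContinuousLinearMap.comp_assoc, hJJ']
      ext x; rfl
    rw [ContinuousLinearMap.star_eq_adjoint, this]
    rfl
  have hspec : spectrum ℂ (star A) = spectrum ℂ A := by
    rw [hAstar]
    exact spectrum.units_conjugate (u := ⟨J, J', hJJ', hJ'J⟩)
  intro z
  rw [key z, hspec]
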